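/- Define x(ξ,η) = 1/(η − ξ), y(ξ,η) = η/(η − ξ), and μ(ξ,η) = −log(η − ξ) on the domain {(ξ,η) ∈ ℝ² : η > ξ}. Then x, y, μ satisfy the twistor compatibility system at every point of this domain, i.e. x_{ξη} = μ_ξ·x_η + μ_η·x_ξ and y_{ξη} = μ_ξ·y_η + μ_η·y_ξ. -/
import Mathlib

open Real Filter

private lemma xin (s ξ : ℝ) (hs : s ≠ ξ) :
    deriv (fun t => 1 / (s - t)) ξ = 1 / (s - ξ) ^ 2 := by
  have h : s - ξ ≠ 0 := sub_ne_zero.2 hs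
  have H : HasDerivAt (fun t => (s - t)⁻¹) (-(-1) / (s - ξ) ^ 2) ξ :=
    ((hasDerivAt_id ξ).const_sub s).inv h
  simp only [one_div]
  simpa using H.deriv

private lemma yin (s ξ : ℝ) (hs : s ≠ ξ) :
    deriv (fun t => s / (s - t)) ξ = s / (s - ξ) ^ 2 := by
  have h : s - ξ ≠ 0 := sub_ne_zero.2 hs
  have H : HasDerivAt (fun t => s * (s - t)⁻¹) (s * (-(-1) / (s - ξ) ^ 2)) ξ :=
    (((hasDerivAt_id ξ).const_sub s).inv h).const_mul s
  have := H.deriv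
  simp only [div_eq_mul_inv]
  rw [this]; ring

/-- the conformally orthotoric (parabolic) data `x = 1/(η − ξ)`,
`y = η/(η − ξ)`, `μ = −log (η − ξ)` satisfies the twistor compatibility system
on `{η > ξ}`. -/
theorem stmt_4 (x y μ : ℝ → ℝ → ℝ)
    (hx : x = fun ξ η => 1 / (η - ξ))
    (hy : y = fun ξ η => η / (η - ξ))
    (hμ : μ = fun ξ η => -Real.log (η - ξ)) :
    ∀ ξ η : ℝ, ξ < η →
      (deriv (fun s => deriv (fun t => x t s) ξ) η
          = deriv (fun t => μ t η) ξ * deriv (fun s => x ξ s) η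
            + deriv (fun s => μ ξ s) η * deriv (fun t => x t η) ξ) ∧
      (deriv (fun s => deriv (fun t => y t s) ξ) η
          = deriv (fun t => μ t η) ξ * deriv (fun s => y ξ s) η
            + deriv (fun s => μ ξ s) η * deriv (fun t => y t η) ξ) := by
  subst hx hy hμ
  intro ξ η hlt
  have hne : η - ξ ≠ 0 := sub_ne_zero.2 hlt.ne'
  have hev : ∀ᶠ s in nhds η, s ≠ ξ := eventually_ne_nhds hlt.ne'
  -- μ derivatives
  have hμξ : deriv (fun t => -Real.log (η - t)) ξ = 1 / (η - ξ) := by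
    have H : HasDerivAt (fun t => -Real.log (η - t)) (-(-1 / (η - ξ))) ξ :=
      (((hasDerivAt_id ξ).const_sub η).log hne).neg
    rw [H.deriv]; ring
  have hμη : deriv (fun s => -Real.log (s - ξ)) η = -(1 / (η - ξ)) := by
    have H : HasDerivAt (fun s => -Real.log (s - ξ)) (-(1 / (η - ξ))) η :=
      (((hasDerivAt_id η).sub_const ξ).log hne).neg
    simpa using H.deriv
  -- first derivatives in η
  have hxη : deriv (fun s => 1 / (s - ξ)) η = -1 / (η - ξ) ^ 2 := by
    have H : HasDerivAt (fun s => (s - ξ)⁻¹) (-1 / (η - ξ) ^ 2) η :=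
      ((hasDerivAt_id η).sub_const ξ).inv hne
    simp only [one_div]
    simpa using H.deriv
  have hyη : deriv (fun s => s / (s - ξ)) η = (1 * (η - ξ) - η * 1) / (η - ξ) ^ 2 := by
    have H : HasDerivAt (fun s => s / (s - ξ))
        ((1 * (η - ξ) - η * 1) / (η - ξ) ^ 2) η :=
      (hasDerivAt_id η).div ((hasDerivAt_id η).sub_const ξ) hne
    exact H.deriv
  -- mixed derivatives
  have hxm : deriv (fun s => deriv (fun t => 1 / (s - t)) ξ) η
      = -(2 * (η - ξ)) / ((η - ξ) ^ 2) ^ 2 := by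
    have he : (fun s => deriv (fun t => 1 / (s - t)) ξ) =ᶠ[nhds η]
        fun s => ((s - ξ) ^ 2)⁻¹ := by
      filter_upwards [hev] with s hs
      rw [xin s ξ hs, one_div]
    rw [he.deriv_eq]
    have H : HasDerivAt (fun s => ((s - ξ) ^ 2)⁻¹)
        (-(2 * (η - ξ) ^ 1 * 1) / ((η - ξ) ^ 2) ^ 2) η :=
      (((hasDerivAt_id η).sub_const ξ).pow 2).inv (pow_ne_zero 2 hne)
    simpa using H.deriv
  have hym : deriv (fun s => deriv (fun t => s / (s - t)) ξ) η
      = (1 * (η - ξ) ^ 2 - η * (2 * (η - ξ))) / ((η - ξ) ^ 2) ^ 2 := by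
    have he : (fun s => deriv (fun t => s / (s - t)) ξ) =ᶠ[nhds η]
        fun s => s / (s - ξ) ^ 2 := by
      filter_upwards [hev] with s hs
      exact yin s ξ hs
    rw [he.deriv_eq]
    have H : HasDerivAt (fun s => s / (s - ξ) ^ 2)
        ((1 * (η - ξ) ^ 2 - η * (2 * (η - ξ) ^ 1 * 1)) / ((η - ξ) ^ 2) ^ 2) η :=
      (hasDerivAt_id η).div (((hasDerivAt_id η).sub_const ξ).pow 2) (pow_ne_zero 2 hne)
    simpa using H.deriv
  refine ⟨?_, ?_⟩
  · rw [hxm, hμξ, hμη, hxη, xin η ξ hlt.ne']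
    field_simp
    ring
  · rw [hym, hμξ, hμη, hyη, yin η ξ hlt.ne']
    field_simp
    ring
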